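/- No two adjacent vertices in a 5-connected planar graph can have four or more common neighbors. -/

import Mathlib

/-- `H` is a minor of `G`: there are nonempty, connected, pairwise disjoint
branch sets in `G`, one for each vertex of `H`, with an edge of `G` between the
branch sets of any two adjacent vertices of `H`. -/
def HasMinor {V W : Type*} (G : SimpleGraph V) (H : SimpleGraph W) : Prop :=
  ∃ f : W → Set V, (∀ w, (f w).Nonempty) ∧ (∀ w, (G.induce (f w)).Connected) ∧
    (∀ w₁ w₂, w₁ ≠ w₂ → Disjoint (f w₁) (f w₂)) ∧
    (∀ w₁ w₂, H.Adj w₁ w₂ → ∃ a ∈ f w₁, ∃ b ∈ f w₂, G.Adj a b)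

/-- A graph is planar iff it has no `K₅` minor and no `K_{3,3}` minor. -/
def IsPlanar {V : Type*} (G : SimpleGraph V) : Prop :=
  ¬ HasMinor G (⊤ : SimpleGraph (Fin 5)) ∧
    ¬ HasMinor G (completeBipartiteGraph (Fin 3) (Fin 3))

/-- `G` is 5-connected: at least 6 vertices, and removing any set of at most 4
vertices leaves it connected. -/
def FiveConnected {V : Type*} [Fintype V] [DecidableEq V] (G : SimpleGraph V) : Prop :=
  6 ≤ Fintype.card V ∧
    ∀ s : Finset V, s.card ≤ 4 → (G.induce ((↑s : Set V)ᶜ)).Connected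

open SimpleGraph Set Walk

section helpers

variable {V : Type*} {G : SimpleGraph V}

/-- The support of a walk, as a set. -/
def sps {a b : V} (p : G.Walk a b) : Set V := {x | x ∈ p.support}

@[simp] lemma mem_sps {a b x : V} {p : G.Walk a b} : x ∈ sps p ↔ x ∈ p.support := Iff.rfl

lemma sps_connected {a b : V} (p : G.Walk a b) : (G.induce (sps p)).Connected :=
  p.connected_induce_support

@[simp] lemma sps_reverse {a b : V} (p : G.Walk a b) : sps p.reverse = sps p := by
  ext x; simp [sps, support_reverse]

lemma start_mem_sps {a b : V} (p : G.Walk a b) : a ∈ sps p := p.start_mem_support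
lemma end_mem_sps {a b : V} (p : G.Walk a b) : b ∈ sps p := p.end_mem_support

lemma induce_singleton_connected (G : SimpleGraph V) (a : V) :
    (G.induce ({a} : Set V)).Connected := by
  have hne : Nonempty ({a} : Set V) := ⟨⟨a, rfl⟩⟩
  constructor
  rintro ⟨x, hx⟩ ⟨y, hy⟩
  simp only [Set.mem_singleton_iff] at hx hy
  subst hx; subst hy
  exact Reachable.refl _

/-- Remove the first vertex of a path. -/
lemma exists_tail {a b : V} {p : G.Walk a b} (hp : p.IsPath) (hab : a ≠ b) :
    ∃ c, G.Adj a c ∧ ∃ q : G.Walk c b, q.IsPath ∧ sps q = sps p \ {a} := by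
  cases p with
  | nil => exact absurd rfl hab
  | @cons _ c _ h q =>
    rw [Walk.cons_isPath_iff] at hp
    refine ⟨c, h, q, hp.1, ?_⟩
    ext x
    simp only [mem_sps, Set.mem_diff, Set.mem_singleton_iff, Walk.support_cons, List.mem_cons]
    constructor
    · intro hx
      exact ⟨Or.inr hx, fun hxa => hp.2 (hxa ▸ hx)⟩
    · rintro ⟨hx | hx, hxa⟩
      · exact absurd hx hxa
      · exact hx

/-- Remove both endpoints of a path having an interior vertex. -/
lemma exists_interior {a b : V} {p : G.Walk a b} (hp : p.IsPath) (hab : a ≠ b) {m : V}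
    (hm : m ∈ p.support) (hma : m ≠ a) (hmb : m ≠ b) :
    ∃ c d, G.Adj a c ∧ G.Adj d b ∧ ∃ q : G.Walk c d, q.IsPath ∧
      sps q = sps p \ {a, b} := by
  obtain ⟨c, hac, q1, hq1, hq1s⟩ := exists_tail hp hab
  have hmq1 : m ∈ sps q1 := by rw [hq1s]; exact ⟨hm, hma⟩
  have hcb : c ≠ b := by
    rintro rfl
    rw [Walk.isPath_iff_eq_nil] at hq1
    subst hq1
    simp only [mem_sps, Walk.support_nil, List.mem_singleton] at hmq1
    exact hmb hmq1
  obtain ⟨d, hbd, q2, hq2, hq2s⟩ := exists_tail hq1.reverse (Ne.symm hcb)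
  refine ⟨c, d, hac, hbd.symm, q2.reverse, hq2.reverse, ?_⟩
  rw [sps_reverse] at hq2s ⊢
  rw [hq2s, hq1s]
  rw [Set.diff_diff, Set.singleton_union]
/-- Split a walk at the first vertex belonging to `s`. -/
lemma exists_firstHit {s : Set V} : ∀ {a b : V} (p : G.Walk a b), (∃ x ∈ p.support, x ∈ s) →
    ∃ (c : V) (q : G.Walk a c) (r : G.Walk c b), c ∈ s ∧ q.append r = p ∧
      ∀ x ∈ q.support, x ∈ s → x = c
  | a, _, Walk.nil, h => by
    have has : a ∈ s := by
      obtain ⟨x, hx, hxs⟩ := h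
      simp only [Walk.support_nil, List.mem_singleton] at hx
      rwa [hx] at hxs
    exact ⟨a, Walk.nil, Walk.nil, has, rfl, fun x hx _ => by simpa using hx⟩
  | a, b, Walk.cons hadj p, h => by
    classical
    by_cases has : a ∈ s
    · exact ⟨a, Walk.nil, Walk.cons hadj p, has, rfl, by simp⟩
    · have h' : ∃ x ∈ p.support, x ∈ s := by
        obtain ⟨x, hx, hxs⟩ := h
        simp only [Walk.support_cons, List.mem_cons] at hx
        rcases hx with rfl | hx
        · exact absurd hxs has
        · exact ⟨x, hx, hxs⟩
      obtain ⟨c', q, r, hc's, happ, hq⟩ := exists_firstHit p h'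
      refine ⟨c', Walk.cons hadj q, r, hc's, by rw [Walk.cons_append, happ], ?_⟩
      intro x hx hxs
      simp only [Walk.support_cons, List.mem_cons] at hx
      rcases hx with rfl | hx
      · exact absurd hxs has
      · exact hq x hx hxs

lemma support_inter_of_append {a b c : V} {q : G.Walk a c} {r : G.Walk c b}
    (h : (q.append r).IsPath) : ∀ x, x ∈ q.support → x ∈ r.support → x = c := by
  intro x hxq hxr
  have hnd := h.support_nodup
  rw [Walk.support_append] at hnd
  rw [Walk.support_eq_cons r] at hxr
  rcases List.mem_cons.mp hxr with rfl | hxr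
  · rfl
  · exact absurd hxq (List.disjoint_right.mp (List.nodup_append'.mp hnd).2.2 hxr)

/-- Extract a path between two vertices of a connected induced subgraph,
staying inside the set. -/
lemma exists_path_in [DecidableEq V] {t : Set V} (h : (G.induce t).Connected) {x y : V}
    (hx : x ∈ t) (hy : y ∈ t) :
    ∃ p : G.Walk x y, p.IsPath ∧ ∀ z ∈ p.support, z ∈ t := by
  obtain ⟨p0⟩ := h ⟨x, hx⟩ ⟨y, hy⟩
  let f : G.induce t →g G := (SimpleGraph.Embedding.induce t).toHom
  have hp1 : ∀ z ∈ (p0.map f).support, z ∈ t := by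
    intro z hz
    rw [Walk.support_map] at hz
    obtain ⟨⟨z', hz'⟩, _, rfl⟩ := List.mem_map.mp hz
    exact hz'
  exact ⟨(p0.map f).bypass, Walk.bypass_isPath _,
    fun z hz => hp1 z (Walk.support_bypass_subset _ hz)⟩

lemma card_le_four [DecidableEq V] (a b c d : V) : ({a, b, c, d} : Finset V).card ≤ 4 := by
  apply le_trans (Finset.card_insert_le _ _)
  have h2 : ({b, c, d} : Finset V).card ≤ 3 := by
    apply le_trans (Finset.card_insert_le _ _)
    have h3 : ({c, d} : Finset V).card ≤ 2 := by
      apply le_trans (Finset.card_insert_le _ _)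
      simp
    omega
  omega

lemma avoid_path [DecidableEq V]
    (h5c : ∀ s : Finset V, s.card ≤ 4 → (G.induce ((↑s : Set V)ᶜ)).Connected)
    (a b c d x y : V) (hx1 : x ≠ a) (hx2 : x ≠ b) (hx3 : x ≠ c) (hx4 : x ≠ d)
    (hy1 : y ≠ a) (hy2 : y ≠ b) (hy3 : y ≠ c) (hy4 : y ≠ d) :
    ∃ p : G.Walk x y, p.IsPath ∧
      ∀ z ∈ p.support, z ≠ a ∧ z ≠ b ∧ z ≠ c ∧ z ≠ d := by
  have hconn := h5c {a, b, c, d} (card_le_four a b c d)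
  have hmem : ∀ w : V, w ∈ ((↑({a, b, c, d} : Finset V) : Set V)ᶜ) ↔
      (w ≠ a ∧ w ≠ b ∧ w ≠ c ∧ w ≠ d) := by
    intro w
    simp [not_or]
  obtain ⟨p, hp, hps⟩ := exists_path_in hconn ((hmem x).mpr ⟨hx1, hx2, hx3, hx4⟩)
    ((hmem y).mpr ⟨hy1, hy2, hy3, hy4⟩)
  exact ⟨p, hp, fun z hz => (hmem z).mp (hps z hz)⟩

lemma exists_four {s : Set V} (hfin : s.Finite) (h : 4 ≤ s.ncard) :
    ∃ w1 w2 w3 w4, w1 ∈ s ∧ w2 ∈ s ∧ w3 ∈ s ∧ w4 ∈ s ∧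
      w1 ≠ w2 ∧ w1 ≠ w3 ∧ w1 ≠ w4 ∧ w2 ≠ w3 ∧ w2 ≠ w4 ∧ w3 ≠ w4 := by
  obtain ⟨w1, h1⟩ := Set.nonempty_of_ncard_ne_zero (s := s) (by omega)
  have e1 : (s \ {w1}).ncard = s.ncard - 1 := Set.ncard_diff_singleton_of_mem h1
  obtain ⟨w2, h2⟩ := Set.nonempty_of_ncard_ne_zero (s := s \ {w1}) (by omega)
  have e2 : ((s \ {w1}) \ {w2}).ncard = (s \ {w1}).ncard - 1 :=
    Set.ncard_diff_singleton_of_mem h2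
  obtain ⟨w3, h3⟩ := Set.nonempty_of_ncard_ne_zero (s := (s \ {w1}) \ {w2}) (by omega)
  have e3 : (((s \ {w1}) \ {w2}) \ {w3}).ncard = ((s \ {w1}) \ {w2}).ncard - 1 :=
    Set.ncard_diff_singleton_of_mem h3
  obtain ⟨w4, h4⟩ := Set.nonempty_of_ncard_ne_zero (s := ((s \ {w1}) \ {w2}) \ {w3}) (by omega)
  simp only [Set.mem_diff, Set.mem_singleton_iff] at h2 h3 h4
  exact ⟨w1, w2, w3, w4, h1, h2.1, h3.1.1, h4.1.1.1,
    fun e => h2.2 e.symm, fun e => h3.1.2 e.symm, fun e => h4.1.1.2 e.symm,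
    fun e => h3.2 e.symm, fun e => h4.1.2 e.symm, fun e => h4.2 e.symm⟩

section builders

lemma K33_of (G : SimpleGraph V) (A B C X Y Z : Set V)
    (cA : (G.induce A).Connected) (cB : (G.induce B).Connected) (cC : (G.induce C).Connected)
    (cX : (G.induce X).Connected) (cY : (G.induce Y).Connected) (cZ : (G.induce Z).Connected)
    (dAB : Disjoint A B) (dAC : Disjoint A C) (dAX : Disjoint A X) (dAY : Disjoint A Y)
    (dAZ : Disjoint A Z) (dBC : Disjoint B C) (dBX : Disjoint B X) (dBY : Disjoint B Y)
    (dBZ : Disjoint B Z) (dCX : Disjoint C X) (dCY : Disjoint C Y) (dCZ : Disjoint C Z)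
    (dXY : Disjoint X Y) (dXZ : Disjoint X Z) (dYZ : Disjoint Y Z)
    (eAX : ∃ a ∈ A, ∃ b ∈ X, G.Adj a b) (eAY : ∃ a ∈ A, ∃ b ∈ Y, G.Adj a b)
    (eAZ : ∃ a ∈ A, ∃ b ∈ Z, G.Adj a b) (eBX : ∃ a ∈ B, ∃ b ∈ X, G.Adj a b)
    (eBY : ∃ a ∈ B, ∃ b ∈ Y, G.Adj a b) (eBZ : ∃ a ∈ B, ∃ b ∈ Z, G.Adj a b)
    (eCX : ∃ a ∈ C, ∃ b ∈ X, G.Adj a b) (eCY : ∃ a ∈ C, ∃ b ∈ Y, G.Adj a b)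
    (eCZ : ∃ a ∈ C, ∃ b ∈ Z, G.Adj a b) :
    HasMinor G (completeBipartiteGraph (Fin 3) (Fin 3)) := by
  have hne : ∀ a ∈ A, ∀ b ∈ X, G.Adj a b → A.Nonempty := fun a ha _ _ _ => ⟨a, ha⟩
  refine ⟨fun w => Sum.elim (![A, B, C]) (![X, Y, Z]) w, ?_, ?_, ?_, ?_⟩
  · rintro (i | i) <;> fin_cases i <;>
      simp only [Sum.elim_inl, Sum.elim_inr, Matrix.cons_val_zero, Matrix.cons_val_one,
        Matrix.head_cons, Matrix.cons_val_two, Matrix.tail_cons]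
    · obtain ⟨a, ha, -⟩ := eAX; exact ⟨a, ha⟩
    · obtain ⟨a, ha, -⟩ := eBX; exact ⟨a, ha⟩
    · obtain ⟨a, ha, -⟩ := eCX; exact ⟨a, ha⟩
    · obtain ⟨-, -, b, hb, -⟩ := eAX; exact ⟨b, hb⟩
    · obtain ⟨-, -, b, hb, -⟩ := eAY; exact ⟨b, hb⟩
    · obtain ⟨-, -, b, hb, -⟩ := eAZ; exact ⟨b, hb⟩
  · rintro (i | i) <;> fin_cases i <;>
      simp only [Sum.elim_inl, Sum.elim_inr, Matrix.cons_val_zero, Matrix.cons_val_one,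
        Matrix.head_cons, Matrix.cons_val_two, Matrix.tail_cons] <;>
      assumption
  · rintro (i | i) (j | j) hij <;> fin_cases i <;> fin_cases j <;>
      simp only [Sum.elim_inl, Sum.elim_inr, Matrix.cons_val_zero, Matrix.cons_val_one,
        Matrix.head_cons, Matrix.cons_val_two, Matrix.tail_cons] <;>
      first
        | exact absurd rfl hij
        | assumption
        | (first
            | exact dAB.symm | exact dAC.symm | exact dAX.symm | exact dAY.symm
            | exact dAZ.symm | exact dBC.symm | exact dBX.symm | exact dBY.symm
            | exact dBZ.symm | exact dCX.symm | exact dCY.symm | exact dCZ.symm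
            | exact dXY.symm | exact dXZ.symm | exact dYZ.symm)
  · have sw : ∀ {S T : Set V}, (∃ a ∈ S, ∃ b ∈ T, G.Adj a b) →
        ∃ a ∈ T, ∃ b ∈ S, G.Adj a b := by
      rintro S T ⟨a, ha, b, hb, h⟩; exact ⟨b, hb, a, ha, h.symm⟩
    rintro (i | i) (j | j) hadj
    · exact absurd hadj (by simp [completeBipartiteGraph])
    · fin_cases i <;> fin_cases j <;>
        simp only [Sum.elim_inl, Sum.elim_inr, Matrix.cons_val_zero, Matrix.cons_val_one,
          Matrix.head_cons, Matrix.cons_val_two, Matrix.tail_cons]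
      exacts [eAX, eAY, eAZ, eBX, eBY, eBZ, eCX, eCY, eCZ]
    · fin_cases i <;> fin_cases j <;>
        simp only [Sum.elim_inl, Sum.elim_inr, Matrix.cons_val_zero, Matrix.cons_val_one,
          Matrix.head_cons, Matrix.cons_val_two, Matrix.tail_cons]
      exacts [sw eAX, sw eBX, sw eCX, sw eAY, sw eBY, sw eCY, sw eAZ, sw eBZ, sw eCZ]
    · exact absurd hadj (by simp [completeBipartiteGraph])

lemma K5_of (G : SimpleGraph V) (A B C X Y : Set V)
    (cA : (G.induce A).Connected) (cB : (G.induce B).Connected) (cC : (G.induce C).Connected)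
    (cX : (G.induce X).Connected) (cY : (G.induce Y).Connected)
    (dAB : Disjoint A B) (dAC : Disjoint A C) (dAX : Disjoint A X) (dAY : Disjoint A Y)
    (dBC : Disjoint B C) (dBX : Disjoint B X) (dBY : Disjoint B Y)
    (dCX : Disjoint C X) (dCY : Disjoint C Y) (dXY : Disjoint X Y)
    (eAB : ∃ a ∈ A, ∃ b ∈ B, G.Adj a b) (eAC : ∃ a ∈ A, ∃ b ∈ C, G.Adj a b)
    (eAX : ∃ a ∈ A, ∃ b ∈ X, G.Adj a b) (eAY : ∃ a ∈ A, ∃ b ∈ Y, G.Adj a b)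
    (eBC : ∃ a ∈ B, ∃ b ∈ C, G.Adj a b) (eBX : ∃ a ∈ B, ∃ b ∈ X, G.Adj a b)
    (eBY : ∃ a ∈ B, ∃ b ∈ Y, G.Adj a b) (eCX : ∃ a ∈ C, ∃ b ∈ X, G.Adj a b)
    (eCY : ∃ a ∈ C, ∃ b ∈ Y, G.Adj a b) (eXY : ∃ a ∈ X, ∃ b ∈ Y, G.Adj a b) :
    HasMinor G (⊤ : SimpleGraph (Fin 5)) := by
  have sw : ∀ {S T : Set V}, (∃ a ∈ S, ∃ b ∈ T, G.Adj a b) →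
      ∃ a ∈ T, ∃ b ∈ S, G.Adj a b := by
    rintro S T ⟨a, ha, b, hb, h⟩; exact ⟨b, hb, a, ha, h.symm⟩
  refine ⟨fun i => ![A, B, C, X, Y] i, ?_, ?_, ?_, ?_⟩
  · intro i; fin_cases i <;>
      simp only [Matrix.cons_val_zero, Matrix.cons_val_one, Matrix.head_cons,
        Matrix.cons_val_two, Matrix.tail_cons, Matrix.cons_val_three, Matrix.cons_val_four]
    · obtain ⟨a, ha, -⟩ := eAB; exact ⟨a, ha⟩
    · obtain ⟨a, ha, -⟩ := eBC; exact ⟨a, ha⟩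
    · obtain ⟨a, ha, -⟩ := eCX; exact ⟨a, ha⟩
    · obtain ⟨a, ha, -⟩ := eXY; exact ⟨a, ha⟩
    · obtain ⟨-, -, b, hb, -⟩ := eXY; exact ⟨b, hb⟩
  · intro i; fin_cases i <;>
      simp only [Matrix.cons_val_zero, Matrix.cons_val_one, Matrix.head_cons,
        Matrix.cons_val_two, Matrix.tail_cons, Matrix.cons_val_three, Matrix.cons_val_four] <;>
      assumption
  · intro i j hij; fin_cases i <;> fin_cases j <;>
      simp only [Matrix.cons_val_zero, Matrix.cons_val_one, Matrix.head_cons,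
        Matrix.cons_val_two, Matrix.tail_cons, Matrix.cons_val_three, Matrix.cons_val_four] <;>
      first
        | exact absurd rfl hij
        | assumption
        | (first
            | exact dAB.symm | exact dAC.symm | exact dAX.symm | exact dAY.symm
            | exact dBC.symm | exact dBX.symm | exact dBY.symm
            | exact dCX.symm | exact dCY.symm | exact dXY.symm)
  · intro i j hij
    have hij' : i ≠ j := by simpa using hij
    fin_cases i <;> fin_cases j <;>
      simp only [Matrix.cons_val_zero, Matrix.cons_val_one, Matrix.head_cons,
        Matrix.cons_val_two, Matrix.tail_cons, Matrix.cons_val_three, Matrix.cons_val_four] <;>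
      first
        | exact absurd rfl hij'
        | assumption
        | (first
            | exact sw eAB | exact sw eAC | exact sw eAX | exact sw eAY
            | exact sw eBC | exact sw eBX | exact sw eBY
            | exact sw eCX | exact sw eCY | exact sw eXY)

end builders

end helpers


/-- main -/
theorem stmt4 {V : Type*} [Fintype V] [DecidableEq V] (G : SimpleGraph V)
    (h5 : FiveConnected G) (hp : IsPlanar G) (u v : V) (huv : G.Adj u v) :
    ¬ 4 ≤ (G.neighborSet u ∩ G.neighborSet v).ncard := by
  intro hcard
  obtain ⟨-, h5c⟩ := h5
  obtain ⟨w1, w2, w3, w4, m1, m2, m3, m4, h12, h13, h14, h23, h24, h34⟩ :=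
    exists_four (Set.toFinite _) hcard
  simp only [Set.mem_inter_iff, SimpleGraph.mem_neighborSet] at m1 m2 m3 m4
  obtain ⟨hu1, hv1⟩ := m1
  obtain ⟨hu2, hv2⟩ := m2
  obtain ⟨hu3, hv3⟩ := m3
  obtain ⟨hu4, hv4⟩ := m4
  have nuv : u ≠ v := huv.ne
  have n1u : w1 ≠ u := fun e => (hu1.ne' (e ▸ rfl)).elim
  have n2u : w2 ≠ u := fun e => (hu2.ne' (e ▸ rfl)).elim
  have n3u : w3 ≠ u := fun e => (hu3.ne' (e ▸ rfl)).elim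
  have n4u : w4 ≠ u := fun e => (hu4.ne' (e ▸ rfl)).elim
  have n1v : w1 ≠ v := fun e => (hv1.ne' (e ▸ rfl)).elim
  have n2v : w2 ≠ v := fun e => (hv2.ne' (e ▸ rfl)).elim
  have n3v : w3 ≠ v := fun e => (hv3.ne' (e ▸ rfl)).elim
  have n4v : w4 ≠ v := fun e => (hv4.ne' (e ▸ rfl)).elim
  -- the two disjoint-cut paths
  obtain ⟨S1, hS1p, hS1a⟩ := avoid_path h5c u v w3 w4 w1 w2 n1u n1v h13 h14 n2u n2v h23 h24
  obtain ⟨S2, hS2p, hS2a⟩ := avoid_path h5c u v w1 w2 w3 w4 n3u n3v h13.symm h23.symm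
    n4u n4v h14.symm h24.symm
  by_cases hmeet : ∃ x ∈ S2.support, x ∈ sps S1
  · -- CASE A : the two paths meet
    have hrev : ∃ x ∈ S2.reverse.support, x ∈ sps S1 := by
      obtain ⟨x, hx, hx1⟩ := hmeet
      exact ⟨x, by simpa [Walk.support_reverse] using hx, hx1⟩
    obtain ⟨z, q, r, hzS1, happ, hqprop⟩ := exists_firstHit S2.reverse hrev
    have hqr : (q.append r).IsPath := by rw [happ]; exact hS2p.reverse
    have hqp : q.IsPath := hqr.of_append_left
    have hrp : r.IsPath := hqr.of_append_right
    have hq_sub : ∀ x ∈ q.support, x ∈ S2.support := by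
      intro x hx
      have h1 : x ∈ (q.append r).support := Walk.subset_support_append_left q r hx
      rw [happ, Walk.support_reverse, List.mem_reverse] at h1
      exact h1
    have hr_sub : ∀ x ∈ r.support, x ∈ S2.support := by
      intro x hx
      have h1 : x ∈ (q.append r).support := Walk.subset_support_append_right q r hx
      rw [happ, Walk.support_reverse, List.mem_reverse] at h1
      exact h1
    have hzS2 : z ∈ S2.support := hq_sub z q.end_mem_support
    have nz1 : z ≠ w1 := (hS2a z hzS2).2.2.1
    have nz2 : z ≠ w2 := (hS2a z hzS2).2.2.2
    have nz3 : z ≠ w3 := (hS1a z hzS1).2.2.1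
    have nz4 : z ≠ w4 := (hS1a z hzS1).2.2.2
    obtain ⟨c1, d1, hw1c1, hd1w2, qI, hqIp, hqIs⟩ := exists_interior hS1p h12 hzS1 nz1 nz2
    obtain ⟨c2, hw3c2, qT1, hqT1p, hqT1s⟩ := exists_tail hrp.reverse (Ne.symm nz3)
    obtain ⟨c3, hzc3, qT2, hqT2p, hqT2s⟩ := exists_tail hqp.reverse nz4
    rw [sps_reverse] at hqT1s hqT2s
    set I : Set V := sps qI with hI
    set T1 : Set V := sps qT1 with hT1
    set T2 : Set V := sps qT2 with hT2
    set C : Set V := I ∪ T1 with hC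
    have hzI : z ∈ I := by rw [hqIs]; exact ⟨hzS1, by simp [nz1, nz2]⟩
    have hzT1 : z ∈ T1 := by
      rw [hqT1s]
      exact ⟨r.start_mem_support, by simp [nz3]⟩
    have hCconn : (G.induce C).Connected :=
      induce_union_connected (sps_connected qI).preconnected (sps_connected qT1).preconnected ⟨z, hzI, hzT1⟩
    have hIsub : ∀ x ∈ I, x ∈ S1.support ∧ x ≠ w1 ∧ x ≠ w2 := by
      intro x hx
      rw [hqIs] at hx
      obtain ⟨hx1, hx2⟩ := hx
      simp only [Set.mem_insert_iff, Set.mem_singleton_iff, not_or] at hx2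
      exact ⟨hx1, hx2.1, hx2.2⟩
    have hT1sub : ∀ x ∈ T1, x ∈ r.support ∧ x ≠ w3 := by
      intro x hx
      rw [hqT1s] at hx
      obtain ⟨hx1, hx2⟩ := hx
      exact ⟨hx1, by simpa using hx2⟩
    have hT2sub : ∀ x ∈ T2, x ∈ q.support ∧ x ≠ z := by
      intro x hx
      rw [hqT2s] at hx
      obtain ⟨hx1, hx2⟩ := hx
      exact ⟨hx1, by simpa using hx2⟩
    have hCuv : ∀ x ∈ C, x ≠ u ∧ x ≠ v := by
      rintro x (hx | hx)
      · have := hS1a x (hIsub x hx).1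
        exact ⟨this.1, this.2.1⟩
      · have := hS2a x (hr_sub x (hT1sub x hx).1)
        exact ⟨this.1, this.2.1⟩
    have hw4T2 : w4 ∈ T2 := by
      rw [hqT2s]
      exact ⟨q.start_mem_support, by simp [Ne.symm nz4]⟩
    refine hp.2 (K33_of G {u} {v} C {w1} {w2} T2
      (induce_singleton_connected G u) (induce_singleton_connected G v) hCconn
      (induce_singleton_connected G w1) (induce_singleton_connected G w2) (sps_connected qT2)
      ?_ ?_ ?_ ?_ ?_ ?_ ?_ ?_ ?_ ?_ ?_ ?_ ?_ ?_ ?_ ?_ ?_ ?_ ?_ ?_ ?_ ?_ ?_ ?_)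
    · exact Set.disjoint_singleton.mpr nuv
    · exact Set.disjoint_singleton_left.mpr (fun h => (hCuv u h).1 rfl)
    · exact Set.disjoint_singleton.mpr (Ne.symm n1u)
    · exact Set.disjoint_singleton.mpr (Ne.symm n2u)
    · exact Set.disjoint_singleton_left.mpr
        (fun h => (hS2a u (hq_sub u (hT2sub u h).1)).1 rfl)
    · exact Set.disjoint_singleton_left.mpr (fun h => (hCuv v h).2 rfl)
    · exact Set.disjoint_singleton.mpr (Ne.symm n1v)
    · exact Set.disjoint_singleton.mpr (Ne.symm n2v)
    · exact Set.disjoint_singleton_left.mpr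
        (fun h => (hS2a v (hq_sub v (hT2sub v h).1)).2.1 rfl)
    · refine Set.disjoint_singleton_right.mpr ?_
      rintro (hx | hx)
      · exact (hIsub w1 hx).2.1 rfl
      · exact (hS2a w1 (hr_sub w1 (hT1sub w1 hx).1)).2.2.1 rfl
    · refine Set.disjoint_singleton_right.mpr ?_
      rintro (hx | hx)
      · exact (hIsub w2 hx).2.2 rfl
      · exact (hS2a w2 (hr_sub w2 (hT1sub w2 hx).1)).2.2.2 rfl
    · refine Set.disjoint_left.mpr ?_
      rintro x (hx | hx) hxT2
      · exact (hT2sub x hxT2).2 (hqprop x (hT2sub x hxT2).1 (hIsub x hx).1)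
      · exact (hT2sub x hxT2).2
          (support_inter_of_append hqr x (hT2sub x hxT2).1 (hT1sub x hx).1)
    · exact Set.disjoint_singleton.mpr h12
    · exact Set.disjoint_singleton_left.mpr
        (fun h => (hS2a w1 (hq_sub w1 (hT2sub w1 h).1)).2.2.1 rfl)
    · exact Set.disjoint_singleton_left.mpr
        (fun h => (hS2a w2 (hq_sub w2 (hT2sub w2 h).1)).2.2.2 rfl)
    · exact ⟨u, rfl, w1, rfl, hu1⟩
    · exact ⟨u, rfl, w2, rfl, hu2⟩
    · exact ⟨u, rfl, w4, hw4T2, hu4⟩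
    · exact ⟨v, rfl, w1, rfl, hv1⟩
    · exact ⟨v, rfl, w2, rfl, hv2⟩
    · exact ⟨v, rfl, w4, hw4T2, hv4⟩
    · exact ⟨c1, Or.inl (start_mem_sps qI), w1, rfl, hw1c1.symm⟩
    · exact ⟨d1, Or.inl (end_mem_sps qI), w2, rfl, hd1w2⟩
    · exact ⟨z, Or.inl hzI, c3, start_mem_sps qT2, hzc3⟩
  · -- CASE B : the two paths are disjoint
    have hd12 : ∀ x ∈ S2.support, x ∉ S1.support := by
      intro x hx hx1
      exact hmeet ⟨x, hx, hx1⟩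
    obtain ⟨S3, hS3p, hS3a⟩ := avoid_path h5c u v w1 w3 w2 w4 n2u n2v h12.symm h23
      n4u n4v h14.symm h34.symm
    have hit1 : ∃ x ∈ S3.reverse.support, x ∈ sps S1 :=
      ⟨w2, by rw [Walk.support_reverse, List.mem_reverse]; exact S3.start_mem_support,
        S1.end_mem_support⟩
    obtain ⟨a, q0, r0, haS1, happ0, hq0prop⟩ := exists_firstHit S3.reverse hit1
    have hq0r0 : (q0.append r0).IsPath := by rw [happ0]; exact hS3p.reverse
    have hq0p : q0.IsPath := hq0r0.of_append_left
    have hq0_sub : ∀ x ∈ q0.support, x ∈ S3.support := by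
      intro x hx
      have h1 : x ∈ (q0.append r0).support := Walk.subset_support_append_left q0 r0 hx
      rw [happ0, Walk.support_reverse, List.mem_reverse] at h1
      exact h1
    have hit2 : ∃ x ∈ q0.reverse.support, x ∈ sps S2 :=
      ⟨w4, by rw [Walk.support_reverse, List.mem_reverse]; exact q0.start_mem_support,
        S2.end_mem_support⟩
    obtain ⟨b, T, r1, hbS2, happ1, hq1prop⟩ := exists_firstHit q0.reverse hit2
    have hTr1 : (T.append r1).IsPath := by rw [happ1]; exact hq0p.reverse
    have hTp : T.IsPath := hTr1.of_append_left
    have hT_subq0 : ∀ x ∈ T.support, x ∈ q0.support := by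
      intro x hx
      have h1 : x ∈ (T.append r1).support := Walk.subset_support_append_left T r1 hx
      rw [happ1, Walk.support_reverse, List.mem_reverse] at h1
      exact h1
    have hT_sub3 : ∀ x ∈ T.support, x ∈ S3.support := fun x hx => hq0_sub x (hT_subq0 x hx)
    have hTprop1 : ∀ x ∈ T.support, x ∈ S1.support → x = a := fun x hx hx1 =>
      hq0prop x (hT_subq0 x hx) hx1
    have haS1' : a ∈ S1.support := haS1
    have haS3 : a ∈ S3.support := hq0_sub a q0.end_mem_support
    have na1 : a ≠ w1 := (hS3a a haS3).2.2.1
    have hbS3 : b ∈ S3.support := hq0_sub b (hT_subq0 b T.end_mem_support)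
    have nb3 : b ≠ w3 := (hS3a b hbS3).2.2.2
    have hbS2' : b ∈ S2.support := hbS2
    by_cases haw2 : a = w2
    · have haw2' : w2 = a := haw2.symm
      subst haw2'
      by_cases hbw4 : b = w4
      · have hbw4' : w4 = b := hbw4.symm
        subst hbw4'

        -- CASE B-d : the path configuration
        obtain ⟨c1, hw2c1, qA1, hqA1p, hqA1s⟩ := exists_tail hS1p.reverse (Ne.symm h12)
        rw [sps_reverse] at hqA1s
        obtain ⟨c2, hw4c2, qA2, hqA2p, hqA2s⟩ := exists_tail hS2p.reverse (Ne.symm h34)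
        rw [sps_reverse] at hqA2s
        obtain ⟨S4, hS4p, hS4a⟩ := avoid_path h5c u v w2 w4 w1 w3 n1u n1v h12 h14
          n3u n3v h23.symm h34
        have hw1A1 : w1 ∈ sps qA1 := by
          rw [hqA1s]; exact ⟨S1.start_mem_support, by simp [h12]⟩
        have hw3A2 : w3 ∈ sps qA2 := by
          rw [hqA2s]; exact ⟨S2.start_mem_support, by simp [h34]⟩
        have hit3 : ∃ x ∈ S4.reverse.support, x ∈ sps qA1 :=
          ⟨w1, by rw [Walk.support_reverse, List.mem_reverse]; exact S4.start_mem_support, hw1A1⟩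
        obtain ⟨z1, qz, rz, hz1A1, happz, hqzprop⟩ := exists_firstHit S4.reverse hit3
        have hqzrz : (qz.append rz).IsPath := by rw [happz]; exact hS4p.reverse
        have hqzp : qz.IsPath := hqzrz.of_append_left
        have hqz_sub : ∀ x ∈ qz.support, x ∈ S4.support := by
          intro x hx
          have h1 : x ∈ (qz.append rz).support := Walk.subset_support_append_left qz rz hx
          rw [happz, Walk.support_reverse, List.mem_reverse] at h1
          exact h1
        have hit4 : ∃ x ∈ qz.reverse.support, x ∈ sps qA2 :=
          ⟨w3, by rw [Walk.support_reverse, List.mem_reverse]; exact qz.start_mem_support, hw3A2⟩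
        obtain ⟨z2, mid, post, hz2A2, happm, hmidprop⟩ := exists_firstHit qz.reverse hit4
        have hmidpost : (mid.append post).IsPath := by rw [happm]; exact hqzp.reverse
        have hmidp : mid.IsPath := hmidpost.of_append_left
        have hmid_subqz : ∀ x ∈ mid.support, x ∈ qz.support := by
          intro x hx
          have h1 : x ∈ (mid.append post).support := Walk.subset_support_append_left mid post hx
          rw [happm, Walk.support_reverse, List.mem_reverse] at h1
          exact h1
        have hmid_sub4 : ∀ x ∈ mid.support, x ∈ S4.support := fun x hx =>
          hqz_sub x (hmid_subqz x hx)
        have hmidA1 : ∀ x ∈ mid.support, x ∈ sps qA1 → x = z1 := fun x hx h1 =>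
          hqzprop x (hmid_subqz x hx) h1
        have hz1s : z1 ∈ S1.support ∧ z1 ≠ w2 := by
          rw [hqA1s] at hz1A1
          exact ⟨hz1A1.1, by simpa using hz1A1.2⟩
        have hz2s : z2 ∈ S2.support ∧ z2 ≠ w4 := by
          rw [hqA2s] at hz2A2
          exact ⟨hz2A2.1, by simpa using hz2A2.2⟩
        have hz2A2' : z2 ∈ sps qA2 := by
          rw [hqA2s]; exact ⟨hz2s.1, by simp [hz2s.2]⟩
        have hz1T : z1 ∉ T.support := fun h => hz1s.2 (hTprop1 z1 h hz1s.1)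
        have hz2T : z2 ∉ T.support := fun h => hz2s.2 (hq1prop z2 h hz2s.1)
        have hz12 : z1 ≠ z2 := fun e => hd12 z2 hz2s.1 (e ▸ hz1s.1)
        by_cases hmT : ∃ t ∈ mid.support, t ∈ T.support
        · -- CASE B-d-(i) : K33
          obtain ⟨t, htm, htT⟩ := hmT
          have htS4 : t ∈ S4.support := hmid_sub4 t htm
          have ht2 : t ≠ w2 := (hS4a t htS4).2.2.1
          have ht4 : t ≠ w4 := (hS4a t htS4).2.2.2
          have htz1 : t ≠ z1 := fun e => hz1T (e ▸ htT)
          have htz2 : t ≠ z2 := fun e => hz2T (e ▸ htT)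
          obtain ⟨c3, d3, hw2c3, hd3w4, qIT, hqITp, hqITs⟩ :=
            exists_interior hTp h24 htT ht2 ht4
          obtain ⟨c4, d4, hz1c4, hd4z2, qIM, hqIMp, hqIMs⟩ :=
            exists_interior hmidp hz12 htm htz1 htz2
          have htIT : t ∈ sps qIT := by rw [hqITs]; exact ⟨htT, by simp [ht2, ht4]⟩
          have htIM : t ∈ sps qIM := by rw [hqIMs]; exact ⟨htm, by simp [htz1, htz2]⟩
          have hCconn : (G.induce (sps qIT ∪ sps qIM)).Connected :=
            induce_union_connected (sps_connected qIT).preconnected (sps_connected qIM).preconnected ⟨t, htIT, htIM⟩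
          have hCsub : ∀ x ∈ sps qIT ∪ sps qIM,
              (x ∈ T.support ∧ x ≠ w2 ∧ x ≠ w4) ∨ (x ∈ mid.support ∧ x ≠ z1 ∧ x ≠ z2) := by
            rintro x (hx | hx)
            · rw [hqITs] at hx
              obtain ⟨h1, h2⟩ := hx
              simp only [Set.mem_insert_iff, Set.mem_singleton_iff, not_or] at h2
              exact Or.inl ⟨h1, h2.1, h2.2⟩
            · rw [hqIMs] at hx
              obtain ⟨h1, h2⟩ := hx
              simp only [Set.mem_insert_iff, Set.mem_singleton_iff, not_or] at h2
              exact Or.inr ⟨h1, h2.1, h2.2⟩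
          have hCu : ∀ x ∈ sps qIT ∪ sps qIM, x ≠ u ∧ x ≠ v := by
            intro x hx
            rcases hCsub x hx with h | h
            · exact ⟨(hS3a x (hT_sub3 x h.1)).1, (hS3a x (hT_sub3 x h.1)).2.1⟩
            · exact ⟨(hS4a x (hmid_sub4 x h.1)).1, (hS4a x (hmid_sub4 x h.1)).2.1⟩
          have hCw2 : w2 ∉ sps qIT ∪ sps qIM := by
            intro hx
            rcases hCsub _ hx with h | h
            · exact h.2.1 rfl
            · exact (hS4a _ (hmid_sub4 _ h.1)).2.2.1 rfl
          have hCw4 : w4 ∉ sps qIT ∪ sps qIM := by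
            intro hx
            rcases hCsub _ hx with h | h
            · exact h.2.2 rfl
            · exact (hS4a _ (hmid_sub4 _ h.1)).2.2.2 rfl
          have hA2sub : ∀ x ∈ sps qA2, x ∈ S2.support ∧ x ≠ w4 := by
            intro x hx
            rw [hqA2s] at hx
            exact ⟨hx.1, by simpa using hx.2⟩
          have hCZ : Disjoint (sps qIT ∪ sps qIM) (sps qA2) := by
            refine Set.disjoint_left.mpr ?_
            intro x hx hxZ
            rcases hCsub x hx with h | h
            · exact h.2.2 (hq1prop x h.1 (hA2sub x hxZ).1)
            · exact h.2.2 (hmidprop x h.1 hxZ)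
          refine hp.2 (K33_of G {u} {v} (sps qIT ∪ sps qIM) {w2} {w4} (sps qA2)
            (induce_singleton_connected G u) (induce_singleton_connected G v) hCconn
            (induce_singleton_connected G w2) (induce_singleton_connected G w4)
            (sps_connected qA2)
            ?_ ?_ ?_ ?_ ?_ ?_ ?_ ?_ ?_ ?_ ?_ ?_ ?_ ?_ ?_ ?_ ?_ ?_ ?_ ?_ ?_ ?_ ?_ ?_)
          · exact Set.disjoint_singleton.mpr nuv
          · exact Set.disjoint_singleton_left.mpr (fun h => (hCu u h).1 rfl)
          · exact Set.disjoint_singleton.mpr (Ne.symm n2u)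
          · exact Set.disjoint_singleton.mpr (Ne.symm n4u)
          · exact Set.disjoint_singleton_left.mpr (fun h => (hS2a u (hA2sub u h).1).1 rfl)
          · exact Set.disjoint_singleton_left.mpr (fun h => (hCu v h).2 rfl)
          · exact Set.disjoint_singleton.mpr (Ne.symm n2v)
          · exact Set.disjoint_singleton.mpr (Ne.symm n4v)
          · exact Set.disjoint_singleton_left.mpr (fun h => (hS2a v (hA2sub v h).1).2.1 rfl)
          · exact Set.disjoint_singleton_right.mpr hCw2
          · exact Set.disjoint_singleton_right.mpr hCw4
          · exact hCZ
          · exact Set.disjoint_singleton.mpr h24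
          · exact Set.disjoint_singleton_left.mpr (fun h => (hS2a w2 (hA2sub w2 h).1).2.2.2 rfl)
          · exact Set.disjoint_singleton_left.mpr (fun h => (hA2sub w4 h).2 rfl)
          · exact ⟨u, rfl, w2, rfl, hu2⟩
          · exact ⟨u, rfl, w4, rfl, hu4⟩
          · exact ⟨u, rfl, w3, hw3A2, hu3⟩
          · exact ⟨v, rfl, w2, rfl, hv2⟩
          · exact ⟨v, rfl, w4, rfl, hv4⟩
          · exact ⟨v, rfl, w3, hw3A2, hv3⟩
          · exact ⟨c3, Or.inl (start_mem_sps qIT), w2, rfl, hw2c3.symm⟩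
          · exact ⟨d3, Or.inl (end_mem_sps qIT), w4, rfl, hd3w4⟩
          · exact ⟨d4, Or.inr (end_mem_sps qIM), z2, hz2A2', hd4z2⟩
        · -- CASE B-d-(ii) : K5
          push_neg at hmT
          obtain ⟨c5, hw4c5, qB3, hqB3p, hqB3s⟩ := exists_tail hTp.reverse (Ne.symm h24)
          rw [sps_reverse] at hqB3s
          have hw2B3 : w2 ∈ sps qB3 := by
            rw [hqB3s]; exact ⟨T.start_mem_support, by simp [h24]⟩
          have hB3sub : ∀ x ∈ sps qB3, x ∈ T.support ∧ x ≠ w4 := by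
            intro x hx
            rw [hqB3s] at hx
            exact ⟨hx.1, by simpa using hx.2⟩
          have hU1 : (G.induce (sps qA1 ∪ sps mid)).Connected :=
            induce_union_connected (sps_connected qA1).preconnected (sps_connected mid).preconnected
              ⟨z1, hz1A1, mid.start_mem_support⟩
          have hB5conn : (G.induce ((sps qA1 ∪ sps mid) ∪ sps qA2)).Connected :=
            induce_union_connected hU1.preconnected (sps_connected qA2).preconnected
              ⟨z2, Or.inr mid.end_mem_support, hz2A2'⟩
          have hA1sub : ∀ x ∈ sps qA1, x ∈ S1.support ∧ x ≠ w2 := by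
            intro x hx
            rw [hqA1s] at hx
            exact ⟨hx.1, by simpa using hx.2⟩
          have hA2sub : ∀ x ∈ sps qA2, x ∈ S2.support ∧ x ≠ w4 := by
            intro x hx
            rw [hqA2s] at hx
            exact ⟨hx.1, by simpa using hx.2⟩
          have hB5sub : ∀ x ∈ (sps qA1 ∪ sps mid) ∪ sps qA2,
              (x ∈ S1.support ∧ x ≠ w2) ∨ x ∈ mid.support ∨ (x ∈ S2.support ∧ x ≠ w4) := by
            rintro x ((hx | hx) | hx)
            · exact Or.inl (hA1sub x hx)
            · exact Or.inr (Or.inl hx)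
            · exact Or.inr (Or.inr (hA2sub x hx))
          have hB5u : ∀ x ∈ (sps qA1 ∪ sps mid) ∪ sps qA2, x ≠ u ∧ x ≠ v := by
            intro x hx
            rcases hB5sub x hx with h | h | h
            · exact ⟨(hS1a x h.1).1, (hS1a x h.1).2.1⟩
            · exact ⟨(hS4a x (hmid_sub4 x h)).1, (hS4a x (hmid_sub4 x h)).2.1⟩
            · exact ⟨(hS2a x h.1).1, (hS2a x h.1).2.1⟩
          have hB3B5 : Disjoint (sps qB3) ((sps qA1 ∪ sps mid) ∪ sps qA2) := by
            refine Set.disjoint_left.mpr ?_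
            intro x hx hx5
            rcases hB5sub x hx5 with h | h | h
            · exact h.2 (hTprop1 x (hB3sub x hx).1 h.1)
            · exact hmT x h (hB3sub x hx).1
            · exact h.2 (hq1prop x (hB3sub x hx).1 h.1)
          have hw4B5 : w4 ∉ (sps qA1 ∪ sps mid) ∪ sps qA2 := by
            intro hx
            rcases hB5sub _ hx with h | h | h
            · exact (hS1a _ h.1).2.2.2 rfl
            · exact (hS4a _ (hmid_sub4 _ h)).2.2.2 rfl
            · exact h.2 rfl
          refine hp.1 (K5_of G {u} {v} (sps qB3) {w4} ((sps qA1 ∪ sps mid) ∪ sps qA2)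
            (induce_singleton_connected G u) (induce_singleton_connected G v)
            (sps_connected qB3) (induce_singleton_connected G w4) hB5conn
            ?_ ?_ ?_ ?_ ?_ ?_ ?_ ?_ ?_ ?_ ?_ ?_ ?_ ?_ ?_ ?_ ?_ ?_ ?_ ?_)
          · exact Set.disjoint_singleton.mpr nuv
          · exact Set.disjoint_singleton_left.mpr
              (fun h => (hS3a u (hT_sub3 u (hB3sub u h).1)).1 rfl)
          · exact Set.disjoint_singleton.mpr (Ne.symm n4u)
          · exact Set.disjoint_singleton_left.mpr (fun h => (hB5u u h).1 rfl)
          · exact Set.disjoint_singleton_left.mpr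
              (fun h => (hS3a v (hT_sub3 v (hB3sub v h).1)).2.1 rfl)
          · exact Set.disjoint_singleton.mpr (Ne.symm n4v)
          · exact Set.disjoint_singleton_left.mpr (fun h => (hB5u v h).2 rfl)
          · exact Set.disjoint_singleton_right.mpr (fun h => (hB3sub w4 h).2 rfl)
          · exact hB3B5
          · exact Set.disjoint_singleton_left.mpr hw4B5
          · exact ⟨u, rfl, v, rfl, huv⟩
          · exact ⟨u, rfl, w2, hw2B3, hu2⟩
          · exact ⟨u, rfl, w4, rfl, hu4⟩
          · exact ⟨u, rfl, w1, Or.inl (Or.inl hw1A1), hu1⟩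
          · exact ⟨v, rfl, w2, hw2B3, hv2⟩
          · exact ⟨v, rfl, w4, rfl, hv4⟩
          · exact ⟨v, rfl, w1, Or.inl (Or.inl hw1A1), hv1⟩
          · exact ⟨c5, start_mem_sps qB3, w4, rfl, hw4c5.symm⟩
          · exact ⟨w2, hw2B3, c1, Or.inl (Or.inl (start_mem_sps qA1)), hw2c1⟩
          · exact ⟨w4, rfl, c2, Or.inr (start_mem_sps qA2), hw4c2⟩
      · -- CASE B-b
        obtain ⟨c1, hw1c1, qT1, hqT1p, hqT1s⟩ := exists_tail hS1p h12
        obtain ⟨c2, d2, hw3c2, hd2w4, qI2, hqI2p, hqI2s⟩ :=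
          exists_interior hS2p h34 hbS2' nb3 hbw4
        have hw2T1 : w2 ∈ sps qT1 := by
          rw [hqT1s]; exact ⟨S1.end_mem_support, by simp [Ne.symm h12]⟩
        have hbI2 : b ∈ sps qI2 := by rw [hqI2s]; exact ⟨hbS2', by simp [nb3, hbw4]⟩
        have hU1conn : (G.induce (sps qT1 ∪ sps T)).Connected :=
          induce_union_connected (sps_connected qT1).preconnected (sps_connected T).preconnected
            ⟨w2, hw2T1, T.start_mem_support⟩
        have hCconn : (G.induce ((sps qT1 ∪ sps T) ∪ sps qI2)).Connected :=
          induce_union_connected hU1conn.preconnected (sps_connected qI2).preconnected ⟨b, Or.inr T.end_mem_support, hbI2⟩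
        have hCsub : ∀ x ∈ (sps qT1 ∪ sps T) ∪ sps qI2,
            (x ∈ S1.support ∧ x ≠ w1) ∨ x ∈ T.support ∨
              (x ∈ S2.support ∧ x ≠ w3 ∧ x ≠ w4) := by
          rintro x ((hx | hx) | hx)
          · rw [hqT1s] at hx
            exact Or.inl ⟨hx.1, by simpa using hx.2⟩
          · exact Or.inr (Or.inl hx)
          · rw [hqI2s] at hx
            obtain ⟨h1, h2⟩ := hx
            simp only [Set.mem_insert_iff, Set.mem_singleton_iff, not_or] at h2
            exact Or.inr (Or.inr ⟨h1, h2.1, h2.2⟩)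
        have hCu : ∀ x ∈ (sps qT1 ∪ sps T) ∪ sps qI2, x ≠ u ∧ x ≠ v := by
          intro x hx
          rcases hCsub x hx with h | h | h
          · exact ⟨(hS1a x h.1).1, (hS1a x h.1).2.1⟩
          · exact ⟨(hS3a x (hT_sub3 x h)).1, (hS3a x (hT_sub3 x h)).2.1⟩
          · exact ⟨(hS2a x h.1).1, (hS2a x h.1).2.1⟩
        have hCw1 : w1 ∉ (sps qT1 ∪ sps T) ∪ sps qI2 := by
          intro hx
          rcases hCsub _ hx with h | h | h
          · exact h.2 rfl
          · exact (hS3a _ (hT_sub3 _ h)).2.2.1 rfl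
          · exact (hS2a _ h.1).2.2.1 rfl
        have hCw3 : w3 ∉ (sps qT1 ∪ sps T) ∪ sps qI2 := by
          intro hx
          rcases hCsub _ hx with h | h | h
          · exact (hS1a _ h.1).2.2.1 rfl
          · exact (hS3a _ (hT_sub3 _ h)).2.2.2 rfl
          · exact h.2.1 rfl
        have hCw4 : w4 ∉ (sps qT1 ∪ sps T) ∪ sps qI2 := by
          intro hx
          rcases hCsub _ hx with h | h | h
          · exact (hS1a _ h.1).2.2.2 rfl
          · exact hbw4 (hq1prop _ h S2.end_mem_support).symm
          · exact h.2.2 rfl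
        refine hp.2 (K33_of G {u} {v} ((sps qT1 ∪ sps T) ∪ sps qI2) {w1} {w3} {w4}
          (induce_singleton_connected G u) (induce_singleton_connected G v) hCconn
          (induce_singleton_connected G w1) (induce_singleton_connected G w3)
          (induce_singleton_connected G w4)
          ?_ ?_ ?_ ?_ ?_ ?_ ?_ ?_ ?_ ?_ ?_ ?_ ?_ ?_ ?_ ?_ ?_ ?_ ?_ ?_ ?_ ?_ ?_ ?_)
        · exact Set.disjoint_singleton.mpr nuv
        · exact Set.disjoint_singleton_left.mpr (fun h => (hCu u h).1 rfl)
        · exact Set.disjoint_singleton.mpr (Ne.symm n1u)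
        · exact Set.disjoint_singleton.mpr (Ne.symm n3u)
        · exact Set.disjoint_singleton.mpr (Ne.symm n4u)
        · exact Set.disjoint_singleton_left.mpr (fun h => (hCu v h).2 rfl)
        · exact Set.disjoint_singleton.mpr (Ne.symm n1v)
        · exact Set.disjoint_singleton.mpr (Ne.symm n3v)
        · exact Set.disjoint_singleton.mpr (Ne.symm n4v)
        · exact Set.disjoint_singleton_right.mpr hCw1
        · exact Set.disjoint_singleton_right.mpr hCw3
        · exact Set.disjoint_singleton_right.mpr hCw4
        · exact Set.disjoint_singleton.mpr h13
        · exact Set.disjoint_singleton.mpr h14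
        · exact Set.disjoint_singleton.mpr h34
        · exact ⟨u, rfl, w1, rfl, hu1⟩
        · exact ⟨u, rfl, w3, rfl, hu3⟩
        · exact ⟨u, rfl, w4, rfl, hu4⟩
        · exact ⟨v, rfl, w1, rfl, hv1⟩
        · exact ⟨v, rfl, w3, rfl, hv3⟩
        · exact ⟨v, rfl, w4, rfl, hv4⟩
        · exact ⟨c1, Or.inl (Or.inl (start_mem_sps qT1)), w1, rfl, hw1c1.symm⟩
        · exact ⟨c2, Or.inr (start_mem_sps qI2), w3, rfl, hw3c2.symm⟩
        · exact ⟨d2, Or.inr (end_mem_sps qI2), w4, rfl, hd2w4⟩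
    · -- CASE B-a
      obtain ⟨c1, d1, hw1c1, hd1w2, qI, hqIp, hqIs⟩ := exists_interior hS1p h12 haS1' na1 haw2
      obtain ⟨c2, hw3c2, qT, hqTp, hqTs⟩ := exists_tail hS2p h34
      have haI : a ∈ sps qI := by rw [hqIs]; exact ⟨haS1', by simp [na1, haw2]⟩
      have hbT : b ∈ sps qT := by rw [hqTs]; exact ⟨hbS2', by simp [nb3]⟩
      have hU1conn : (G.induce (sps qI ∪ sps T)).Connected :=
        induce_union_connected (sps_connected qI).preconnected (sps_connected T).preconnected
          ⟨a, haI, T.start_mem_support⟩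
      have hCconn : (G.induce ((sps qI ∪ sps T) ∪ sps qT)).Connected :=
        induce_union_connected hU1conn.preconnected (sps_connected qT).preconnected ⟨b, Or.inr T.end_mem_support, hbT⟩
      have hCsub : ∀ x ∈ (sps qI ∪ sps T) ∪ sps qT,
          (x ∈ S1.support ∧ x ≠ w1 ∧ x ≠ w2) ∨ x ∈ T.support ∨
            (x ∈ S2.support ∧ x ≠ w3) := by
        rintro x ((hx | hx) | hx)
        · rw [hqIs] at hx
          obtain ⟨h1, h2⟩ := hx
          simp only [Set.mem_insert_iff, Set.mem_singleton_iff, not_or] at h2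
          exact Or.inl ⟨h1, h2.1, h2.2⟩
        · exact Or.inr (Or.inl hx)
        · rw [hqTs] at hx
          exact Or.inr (Or.inr ⟨hx.1, by simpa using hx.2⟩)
      have hCu : ∀ x ∈ (sps qI ∪ sps T) ∪ sps qT, x ≠ u ∧ x ≠ v := by
        intro x hx
        rcases hCsub x hx with h | h | h
        · exact ⟨(hS1a x h.1).1, (hS1a x h.1).2.1⟩
        · exact ⟨(hS3a x (hT_sub3 x h)).1, (hS3a x (hT_sub3 x h)).2.1⟩
        · exact ⟨(hS2a x h.1).1, (hS2a x h.1).2.1⟩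
      have hCw1 : w1 ∉ (sps qI ∪ sps T) ∪ sps qT := by
        intro hx
        rcases hCsub _ hx with h | h | h
        · exact h.2.1 rfl
        · exact (hS3a _ (hT_sub3 _ h)).2.2.1 rfl
        · exact (hS2a _ h.1).2.2.1 rfl
      have hCw2 : w2 ∉ (sps qI ∪ sps T) ∪ sps qT := by
        intro hx
        rcases hCsub _ hx with h | h | h
        · exact h.2.2 rfl
        · exact haw2 (hTprop1 _ h S1.end_mem_support).symm
        · exact (hS2a _ h.1).2.2.2 rfl
      have hCw3 : w3 ∉ (sps qI ∪ sps T) ∪ sps qT := by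
        intro hx
        rcases hCsub _ hx with h | h | h
        · exact (hS1a _ h.1).2.2.1 rfl
        · exact (hS3a _ (hT_sub3 _ h)).2.2.2 rfl
        · exact h.2 rfl
      refine hp.2 (K33_of G {u} {v} ((sps qI ∪ sps T) ∪ sps qT) {w1} {w2} {w3}
        (induce_singleton_connected G u) (induce_singleton_connected G v) hCconn
        (induce_singleton_connected G w1) (induce_singleton_connected G w2)
        (induce_singleton_connected G w3)
        ?_ ?_ ?_ ?_ ?_ ?_ ?_ ?_ ?_ ?_ ?_ ?_ ?_ ?_ ?_ ?_ ?_ ?_ ?_ ?_ ?_ ?_ ?_ ?_)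
      · exact Set.disjoint_singleton.mpr nuv
      · exact Set.disjoint_singleton_left.mpr (fun h => (hCu u h).1 rfl)
      · exact Set.disjoint_singleton.mpr (Ne.symm n1u)
      · exact Set.disjoint_singleton.mpr (Ne.symm n2u)
      · exact Set.disjoint_singleton.mpr (Ne.symm n3u)
      · exact Set.disjoint_singleton_left.mpr (fun h => (hCu v h).2 rfl)
      · exact Set.disjoint_singleton.mpr (Ne.symm n1v)
      · exact Set.disjoint_singleton.mpr (Ne.symm n2v)
      · exact Set.disjoint_singleton.mpr (Ne.symm n3v)
      · exact Set.disjoint_singleton_right.mpr hCw1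
      · exact Set.disjoint_singleton_right.mpr hCw2
      · exact Set.disjoint_singleton_right.mpr hCw3
      · exact Set.disjoint_singleton.mpr h12
      · exact Set.disjoint_singleton.mpr h13
      · exact Set.disjoint_singleton.mpr h23
      · exact ⟨u, rfl, w1, rfl, hu1⟩
      · exact ⟨u, rfl, w2, rfl, hu2⟩
      · exact ⟨u, rfl, w3, rfl, hu3⟩
      · exact ⟨v, rfl, w1, rfl, hv1⟩
      · exact ⟨v, rfl, w2, rfl, hv2⟩
      · exact ⟨v, rfl, w3, rfl, hv3⟩
      · exact ⟨c1, Or.inl (Or.inl (start_mem_sps qI)), w1, rfl, hw1c1.symm⟩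
      · exact ⟨d1, Or.inl (Or.inl (end_mem_sps qI)), w2, rfl, hd1w2⟩
      · exact ⟨c2, Or.inr (start_mem_sps qT), w3, rfl, hw3c2.symm⟩
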